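/- Let d be even and Ψ ∈ ℝ^{d+1} symmetric with reduced phase factors Φ = (φ₀,...,φ_{d̃-1}), d̃ = d/2 + 1, where Ψ = (φ_{d̃-1},...,φ₁, 2φ₀, φ₁,...,φ_{d̃-1}). Then for each 1 ≤ i ≤ d̃-1 and x ∈ [-1,1], ∂g(x,Φ)/∂φ_i = 2 Im[⟨0| U(x, Ψ + (π/2) e_{d̃-1-i}) |0⟩], where g(x,Φ) = Im[⟨0|U(x,Ψ)|0⟩]. -/

import Mathlib

open Matrix Complex

/-- `e^{iψZ}` where `Z` is the Pauli-Z matrix. -/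
noncomputable def Rz (ψ : ℝ) : Matrix (Fin 2) (Fin 2) ℂ :=
  !![Complex.exp (Complex.I * ψ), 0; 0, Complex.exp (-(Complex.I * ψ))]

/-- `W(x) = e^{i arccos(x) X}` where `X` is the Pauli-X matrix. -/
noncomputable def Wm (x : ℝ) : Matrix (Fin 2) (Fin 2) ℂ :=
  !![(x : ℂ), Complex.I * Real.sqrt (1 - x ^ 2);
     Complex.I * Real.sqrt (1 - x ^ 2), (x : ℂ)]

/-- The QSP unitary `U(x,Ψ) = e^{iψ₀Z} ∏_{j=1}^d (W(x) e^{iψ_jZ})`. -/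
noncomputable def Um (d : ℕ) (x : ℝ) (Ψ : ℕ → ℝ) : Matrix (Fin 2) (Fin 2) ℂ :=
  Rz (Ψ 0) * ((List.range d).map (fun j => Wm x * Rz (Ψ (j + 1)))).prod

/-- Full symmetric phase factors (of even degree d = 2n) built from reduced phase factors:
`Ψ = (φ_{d̃-1},…,φ₁,2φ₀,φ₁,…,φ_{d̃-1})` with `d̃ = n+1`. -/
noncomputable def PsiOf (n : ℕ) (Φ : ℕ → ℝ) : ℕ → ℝ := fun j =>
  if j = n then 2 * Φ 0 else Φ (((j : ℤ) - (n : ℤ)).natAbs)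

noncomputable def pW (x : ℝ) (L : List ℝ) : Matrix (Fin 2) (Fin 2) ℂ :=
  (L.map (fun ψ => Wm x * Rz ψ)).prod

noncomputable def pV (x : ℝ) (L : List ℝ) : Matrix (Fin 2) (Fin 2) ℂ :=
  (L.map (fun ψ => Rz ψ * Wm x)).prod

lemma Rz_transpose (ψ : ℝ) : (Rz ψ)ᵀ = Rz ψ := by
  unfold Rz
  ext i j
  fin_cases i <;> fin_cases j <;> simp

lemma Wm_transpose (x : ℝ) : (Wm x)ᵀ = Wm x := by
  unfold Wm
  ext i j
  fin_cases i <;> fin_cases j <;> simp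

lemma pW_nil (x : ℝ) : pW x [] = 1 := by simp [pW]

lemma pW_cons (x a L) : pW x (a :: L) = Wm x * Rz a * pW x L := by
  simp [pW]

lemma pW_append (x L₁ L₂) : pW x (L₁ ++ L₂) = pW x L₁ * pW x L₂ := by
  simp [pW]

lemma pV_append (x L₁ L₂) : pV x (L₁ ++ L₂) = pV x L₁ * pV x L₂ := by
  simp [pV]

lemma pW_singleton (x a) : pW x [a] = Wm x * Rz a := by simp [pW]

lemma pV_singleton (x a) : pV x [a] = Rz a * Wm x := by simp [pV]

lemma pW_transpose (x L) : (pW x L)ᵀ = pV x L.reverse := by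
  induction L with
  | nil => simp [pW, pV]
  | cons a L ih =>
    rw [pW_cons, transpose_mul, transpose_mul, ih, Rz_transpose, Wm_transpose,
      List.reverse_cons, pV_append, pV_singleton]

lemma pW_shift (x L) : pW x L * Wm x = Wm x * pV x L := by
  induction L with
  | nil => simp [pW, pV]
  | cons a L ih =>
    rw [pW_cons, mul_assoc, ih,
      show pV x (a :: L) = Rz a * Wm x * pV x L from by simp [pV]]
    simp only [mul_assoc]

lemma symm_of_palindrome (x : ℝ) (L : List ℝ) (h : L.reverse = L) :
    (pW x L * Wm x)ᵀ = pW x L * Wm x := by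
  rw [transpose_mul, Wm_transpose, pW_transpose, h, ← pW_shift]

lemma A_transpose (x : ℝ) (c : ℝ) (L : List ℝ) :
    (Rz c * pW x L * Wm x)ᵀ = pW x (L.reverse ++ [c]) := by
  rw [transpose_mul, transpose_mul, Wm_transpose, pW_transpose, Rz_transpose,
    pW_append, pW_singleton, ← mul_assoc, ← mul_assoc, pW_shift]

def phs (Ψ : ℕ → ℝ) (s k : ℕ) : List ℝ := (List.range k).map (fun j => Ψ (s + j))

lemma phs_congr (Ψ Θ : ℕ → ℝ) (s s' k : ℕ) (hs : s = s')
    (h : ∀ j, s ≤ j → j < s + k → Ψ j = Θ j) : phs Ψ s k = phs Θ s' k := by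
  subst hs
  unfold phs
  apply List.map_congr_left
  intro j hj
  exact h _ (Nat.le_add_right _ _) (by simp [List.mem_range] at hj; omega)

lemma phs_add (Ψ s k m) : phs Ψ s (k + m) = phs Ψ s k ++ phs Ψ (s + k) m := by
  simp [phs, List.range_add, List.map_map, Function.comp]
  intro j _
  congr 1
  omega

lemma phs_one (Ψ s) : phs Ψ s 1 = [Ψ s] := by
  simp [phs, List.range_succ]

lemma phs_len (Ψ s k) : (phs Ψ s k).length = k := by simp [phs]

lemma phs_getElem (Ψ s k j) (h : j < (phs Ψ s k).length) : (phs Ψ s k)[j] = Ψ (s + j) := by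
  simp [phs]

lemma Um_eq (d x Ψ) : Um d x Ψ = Rz (Ψ 0) * pW x (phs Ψ 1 d) := by
  unfold Um pW phs
  rw [List.map_map]
  congr 1
  apply congrArg
  apply List.map_congr_left
  intro j _
  simp [Nat.add_comm]

lemma decomp (x : ℝ) (a b : ℕ) (Θ : ℕ → ℝ) :
    Um (2*(a+b+2)) x Θ =
      (Rz (Θ 0) * pW x (phs Θ 1 a) * Wm x) * Rz (Θ (a+1)) *
      (pW x (phs Θ (a+2) (2*b+1)) * Wm x) * Rz (Θ (a+2*b+3)) *
      pW x (phs Θ (a+2*b+4) (a+1)) := by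
  rw [Um_eq]
  rw [show 2*(a+b+2) = a + (1 + ((2*b+1) + (1 + (a+1)))) from by ring]
  rw [phs_add Θ 1 a, phs_add Θ (1+a) 1, phs_add Θ (1+a+1) (2*b+1),
    phs_add Θ (1+a+1+(2*b+1)) 1, phs_one, phs_one]
  rw [pW_append, pW_append, pW_append, pW_append, pW_singleton, pW_singleton]
  rw [show 1 + a = a + 1 from by ring, show a + 1 + 1 = a + 2 from by ring,
    show a + 2 + (2*b+1) = a + 2*b + 3 from by ring,
    show a + 2*b + 3 + 1 = a + 2*b + 4 from by ring]
  simp only [mul_assoc]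

lemma decomp0 (x : ℝ) (b : ℕ) (Θ : ℕ → ℝ) :
    Um (2*(b+1)) x Θ =
      (1 : Matrix (Fin 2) (Fin 2) ℂ) * Rz (Θ 0) *
      (pW x (phs Θ 1 (2*b+1)) * Wm x) * Rz (Θ (2*b+2)) * (1 : Matrix (Fin 2) (Fin 2) ℂ) := by
  rw [Um_eq]
  rw [show 2*(b+1) = (2*b+1) + 1 from by ring]
  rw [phs_add Θ 1 (2*b+1) 1, phs_one, pW_append, pW_singleton]
  rw [show 1 + (2*b+1) = 2*b+2 from by ring]
  simp only [one_mul, mul_one, mul_assoc]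

lemma entry_expand (A B C : Matrix (Fin 2) (Fin 2) ℂ) (s t : ℝ) :
    (A * Rz s * B * Rz t * C) 0 0 =
      A 0 0 * B 0 0 * C 0 0 * (Complex.exp (Complex.I * s) * Complex.exp (Complex.I * t))
      + A 0 0 * B 0 1 * C 1 0 * (Complex.exp (Complex.I * s) * Complex.exp (-(Complex.I * t)))
      + A 0 1 * B 1 0 * C 0 0 * (Complex.exp (-(Complex.I * s)) * Complex.exp (Complex.I * t))
      + A 0 1 * B 1 1 * C 1 0 * (Complex.exp (-(Complex.I * s)) * Complex.exp (-(Complex.I * t))) := by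
  simp [Rz, Matrix.mul_apply, Fin.sum_univ_two]
  ring

lemma hasDerivAt_exp_I (φ : ℝ) :
    HasDerivAt (fun t : ℝ => Complex.exp (Complex.I * t)) (Complex.I * Complex.exp (Complex.I * φ)) φ := by
  have h0 : HasDerivAt (fun t : ℝ => (t : ℂ)) 1 φ := by
    simpa using (hasDerivAt_id φ).ofReal_comp
  have h1 := (h0.const_mul Complex.I).cexp
  simpa [mul_comm] using h1

lemma hasDerivAt_exp_negI (φ : ℝ) :
    HasDerivAt (fun t : ℝ => Complex.exp (-(Complex.I * t)))
      (-(Complex.I * Complex.exp (-(Complex.I * φ)))) φ := by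
  have h0 : HasDerivAt (fun t : ℝ => (t : ℂ)) 1 φ := by
    simpa using (hasDerivAt_id φ).ofReal_comp
  have h1 := ((h0.const_mul Complex.I).neg).cexp
  simpa [mul_comm] using h1

lemma exp_shift (φ : ℝ) :
    Complex.exp (Complex.I * (↑(φ + Real.pi / 2))) = Complex.I * Complex.exp (Complex.I * φ) := by
  push_cast
  rw [mul_add, Complex.exp_add]
  rw [show Complex.I * (↑Real.pi / 2) = (↑Real.pi / 2) * Complex.I from by ring,
    Complex.exp_mul_I]
  rw [show ((↑Real.pi / 2 : ℂ)) = ((Real.pi / 2 : ℝ) : ℂ) from by push_cast; ring,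
    ← Complex.ofReal_cos, ← Complex.ofReal_sin, Real.cos_pi_div_two, Real.sin_pi_div_two]
  simp [mul_comm]

lemma exp_shift_neg (φ : ℝ) :
    Complex.exp (-(Complex.I * (↑(φ + Real.pi / 2)))) =
      -Complex.I * Complex.exp (-(Complex.I * φ)) := by
  push_cast
  rw [mul_add, neg_add, Complex.exp_add]
  rw [show -(Complex.I * (↑Real.pi / 2)) = (-(↑Real.pi / 2)) * Complex.I from by ring,
    Complex.exp_mul_I]
  rw [show ((-(↑Real.pi / 2) : ℂ)) = ((-(Real.pi / 2) : ℝ) : ℂ) from by push_cast; ring,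
    ← Complex.ofReal_cos, ← Complex.ofReal_sin, Real.cos_neg, Real.sin_neg,
    Real.cos_pi_div_two, Real.sin_pi_div_two]
  push_cast
  ring

lemma im_helper (z w : ℂ) (h : z = 2 * w) : Complex.imCLM z = 2 * w.im := by
  subst h
  simp [Complex.mul_im]

lemma deriv_lemma (A B C : Matrix (Fin 2) (Fin 2) ℂ) (hB : B 0 1 = B 1 0)
    (hC0 : C 0 0 = A 0 0) (hC1 : C 1 0 = A 0 1) (φ : ℝ) :
    HasDerivAt (fun t : ℝ => ((A * Rz t * B * Rz t * C) 0 0).im)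
      (2 * ((A * Rz (φ + Real.pi / 2) * B * Rz φ * C) 0 0).im) φ := by
  have h1 := hasDerivAt_exp_I φ
  have h2 := hasDerivAt_exp_negI φ
  have hF := ((((h1.mul h1).const_mul (A 0 0 * B 0 0 * C 0 0)).add
      ((h1.mul h2).const_mul (A 0 0 * B 0 1 * C 1 0))).add
      ((h2.mul h1).const_mul (A 0 1 * B 1 0 * C 0 0))).add
      ((h2.mul h2).const_mul (A 0 1 * B 1 1 * C 1 0))
  have hIm := Complex.imCLM.hasFDerivAt.comp_hasDerivAt φ hF
  have key : Complex.imCLM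
      (A 0 0 * B 0 0 * C 0 0 *
        (Complex.I * Complex.exp (Complex.I * ↑φ) * Complex.exp (Complex.I * ↑φ) +
          Complex.exp (Complex.I * ↑φ) * (Complex.I * Complex.exp (Complex.I * ↑φ))) +
      A 0 0 * B 0 1 * C 1 0 *
        (Complex.I * Complex.exp (Complex.I * ↑φ) * Complex.exp (-(Complex.I * ↑φ)) +
          Complex.exp (Complex.I * ↑φ) * -(Complex.I * Complex.exp (-(Complex.I * ↑φ)))) +
      A 0 1 * B 1 0 * C 0 0 *
        (-(Complex.I * Complex.exp (-(Complex.I * ↑φ))) * Complex.exp (Complex.I * ↑φ) +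
          Complex.exp (-(Complex.I * ↑φ)) * (Complex.I * Complex.exp (Complex.I * ↑φ))) +
      A 0 1 * B 1 1 * C 1 0 *
        (-(Complex.I * Complex.exp (-(Complex.I * ↑φ))) * Complex.exp (-(Complex.I * ↑φ)) +
          Complex.exp (-(Complex.I * ↑φ)) * -(Complex.I * Complex.exp (-(Complex.I * ↑φ))))) =
      2 * ((A * Rz (φ + Real.pi / 2) * B * Rz φ * C) 0 0).im := by
    rw [entry_expand, exp_shift, exp_shift_neg, hB, hC0, hC1]
    apply im_helper
    ring
  rw [← key]
  refine hIm.congr_of_eventuallyEq (Filter.Eventually.of_forall fun t => ?_)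
  simp [Function.comp, entry_expand]

lemma pal (Φ : ℕ → ℝ) (n c b : ℕ) (hn : n = c + b) :
    (phs (PsiOf n Φ) c (2*b+1)).reverse = phs (PsiOf n Φ) c (2*b+1) := by
  subst hn
  apply List.ext_getElem (by simp [phs_len])
  intro j h1 h2
  rw [List.getElem_reverse, phs_getElem, phs_getElem]
  simp only [phs_len] at h1 h2 ⊢
  simp only [PsiOf]
  by_cases hj : j = b
  · rw [if_pos (by omega), if_pos (by omega)]
  · rw [if_neg (by omega), if_neg (by omega)]
    congr 1
    omega

lemma hlist (Φ : ℕ → ℝ) (n a b : ℕ) (hn : n = a + b + 2) :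
    (phs (PsiOf n Φ) 1 a).reverse ++ [PsiOf n Φ 0] = phs (PsiOf n Φ) (a+2*b+4) (a+1) := by
  subst hn
  apply List.ext_getElem (by simp [phs_len])
  intro j h1 h2
  rw [phs_getElem, List.getElem_append]
  simp only [phs_len, List.length_reverse] at h1 h2 ⊢
  split_ifs with hj
  · rw [List.getElem_reverse, phs_getElem]
    simp only [phs_len] at hj ⊢
    simp only [PsiOf]
    rw [if_neg (by omega), if_neg (by omega)]
    congr 1
    omega
  · have hja : j = a := by omega
    subst hja
    simp only [phs_len, Nat.sub_self, List.getElem_singleton]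
    simp only [PsiOf]
    rw [if_neg (by omega), if_neg (by omega)]
    congr 1
    omega

lemma main_aux (n : ℕ) (x : ℝ) (Φ : ℕ → ℝ) (i : ℕ) (hi1 : 1 ≤ i) (hi2 : i ≤ n) :
    ∃ A B C : Matrix (Fin 2) (Fin 2) ℂ,
      B 0 1 = B 1 0 ∧ C 0 0 = A 0 0 ∧ C 1 0 = A 0 1 ∧
      ∀ Θ : ℕ → ℝ, (∀ j, j ≠ n - i → j ≠ n + i → Θ j = PsiOf n Φ j) →
        Um (2*n) x Θ = A * Rz (Θ (n-i)) * B * Rz (Θ (n+i)) * C := by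
  set Ψ := PsiOf n Φ with hΨ
  rcases Nat.lt_or_ge i n with hin | hin
  · -- i < n
    obtain ⟨b, rfl⟩ : ∃ b, i = b + 1 := ⟨i - 1, by omega⟩
    obtain ⟨a, hna⟩ : ∃ a, n = a + b + 2 := ⟨n - b - 2, by omega⟩
    have hBT : (pW x (phs Ψ (a+2) (2*b+1)) * Wm x)ᵀ = pW x (phs Ψ (a+2) (2*b+1)) * Wm x :=
      symm_of_palindrome x _ (pal Φ n (a+2) b (by omega))
    have hAT : (Rz (Ψ 0) * pW x (phs Ψ 1 a) * Wm x)ᵀ = pW x (phs Ψ (a+2*b+4) (a+1)) := by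
      rw [A_transpose, hlist Φ n a b hna]
    refine ⟨Rz (Ψ 0) * pW x (phs Ψ 1 a) * Wm x,
      pW x (phs Ψ (a+2) (2*b+1)) * Wm x,
      pW x (phs Ψ (a+2*b+4) (a+1)), ?_, ?_, ?_, ?_⟩
    · have h := congrFun (congrFun hBT 1) 0
      simpa [Matrix.transpose_apply] using h
    · have h := congrFun (congrFun hAT 0) 0
      simpa [Matrix.transpose_apply] using h.symm
    · have h := congrFun (congrFun hAT 1) 0
      simpa [Matrix.transpose_apply] using h.symm
    · intro Θ hΘ
      rw [show n - (b+1) = a+1 from by omega, show n + (b+1) = a+2*b+3 from by omega,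
        show 2*n = 2*(a+b+2) from by omega, decomp x a b Θ]
      rw [hΘ 0 (by omega) (by omega),
        phs_congr Θ Ψ 1 1 a rfl (fun j hj1 hj2 => hΘ j (by omega) (by omega)),
        phs_congr Θ Ψ (a+2) (a+2) (2*b+1) rfl (fun j hj1 hj2 => hΘ j (by omega) (by omega)),
        phs_congr Θ Ψ (a+2*b+4) (a+2*b+4) (a+1) rfl (fun j hj1 hj2 => hΘ j (by omega) (by omega))]
  · -- i = n
    have hin' : i = n := by omega
    subst hin'
    obtain ⟨b, hnb⟩ : ∃ b, i = b + 1 := ⟨i - 1, by omega⟩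
    have hBT : (pW x (phs Ψ 1 (2*b+1)) * Wm x)ᵀ = pW x (phs Ψ 1 (2*b+1)) * Wm x :=
      symm_of_palindrome x _ (pal Φ i 1 b (by omega))
    refine ⟨1, pW x (phs Ψ 1 (2*b+1)) * Wm x, 1, ?_, by simp, by simp [Matrix.one_apply], ?_⟩
    · have h := congrFun (congrFun hBT 1) 0
      simpa [Matrix.transpose_apply] using h
    · intro Θ hΘ
      rw [show i - i = 0 from by omega, show i + i = 2*b+2 from by omega,
        show 2*i = 2*(b+1) from by omega, decomp0 x b Θ]
      rw [phs_congr Θ Ψ 1 1 (2*b+1) rfl (fun j hj1 hj2 => hΘ j (by omega) (by omega))]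

theorem qsp_reduced_deriv (n : ℕ) (x : ℝ) (hx : x ∈ Set.Icc (-1 : ℝ) 1) (Φ : ℕ → ℝ)
    (i : ℕ) (hi1 : 1 ≤ i) (hi2 : i ≤ n) :
    HasDerivAt (fun t : ℝ => ((Um (2 * n) x (PsiOf n (Function.update Φ i t))) 0 0).im)
      (2 * ((Um (2 * n) x
        (fun j => PsiOf n Φ j + if j = n - i then Real.pi / 2 else 0)) 0 0).im) (Φ i) := by
  obtain ⟨A, B, C, hB, hC0, hC1, hdec⟩ := main_aux n x Φ i hi1 hi2
  have hhyp : ∀ t : ℝ, ∀ j, j ≠ n - i → j ≠ n + i →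
      PsiOf n (Function.update Φ i t) j = PsiOf n Φ j := by
    intro t j h1 h2
    simp only [PsiOf]
    by_cases hj : j = n
    · rw [if_pos hj, if_pos hj, Function.update_of_ne (by omega)]
    · rw [if_neg hj, if_neg hj, Function.update_of_ne (by omega)]
  have hfun : ∀ t : ℝ, Um (2*n) x (PsiOf n (Function.update Φ i t))
      = A * Rz t * B * Rz t * C := by
    intro t
    rw [hdec _ (hhyp t)]
    have hs1 : PsiOf n (Function.update Φ i t) (n - i) = t := by
      simp only [PsiOf]
      rw [if_neg (by omega), show ((((n - i : ℕ) : ℤ)) - (n : ℤ)).natAbs = i from by omega,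
        Function.update_self]
    have hs2 : PsiOf n (Function.update Φ i t) (n + i) = t := by
      simp only [PsiOf]
      rw [if_neg (by omega), show ((((n + i : ℕ) : ℤ)) - (n : ℤ)).natAbs = i from by omega,
        Function.update_self]
    rw [hs1, hs2]
  have hPsi1 : PsiOf n Φ (n - i) = Φ i := by
    simp only [PsiOf]
    rw [if_neg (by omega), show ((((n - i : ℕ) : ℤ)) - (n : ℤ)).natAbs = i from by omega]
  have hPsi2 : PsiOf n Φ (n + i) = Φ i := by
    simp only [PsiOf]
    rw [if_neg (by omega), show ((((n + i : ℕ) : ℤ)) - (n : ℤ)).natAbs = i from by omega]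
  have hval : Um (2*n) x (fun j => PsiOf n Φ j + if j = n - i then Real.pi/2 else 0)
      = A * Rz (Φ i + Real.pi/2) * B * Rz (Φ i) * C := by
    rw [hdec _ (fun j hj1 hj2 => by simp only [if_neg hj1, add_zero])]
    simp only
    rw [if_pos trivial, if_neg (show ¬(n + i = n - i) by omega), add_zero, hPsi1, hPsi2]
  have hgoal : (fun t : ℝ => ((Um (2 * n) x (PsiOf n (Function.update Φ i t))) 0 0).im)
      = fun t : ℝ => ((A * Rz t * B * Rz t * C) 0 0).im :=
    funext fun t => by rw [hfun t]
  rw [hgoal, hval]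
  exact deriv_lemma A B C hB hC0 hC1 (Φ i)
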